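/- arXiv:2404.01937 — 8 statements merged into one kernel-verified Lean document; each statement's English description precedes it below -/
import Mathlib

section
/- Let V be a vector space over a field of characteristic 0 with a bilinear multiplication xy satisfying the single identity 3(xy)z + (yx)z - (xz)y - (yz)x + (zx)y - 3x(yz) = 0 for all x,y,z. Define x∙y = xy+yx and [x,y] = xy-yx. Then (V,∙,[-,-]) is a Poisson algebra: ∙ is commutative and associative, [-,-] satisfies the Jacobi identity, and the Leibniz rule [x∙y,z] = x∙[y,z] + [x,z]∙y holds. -/
/-- A bilinear multiplication satisfying `3(xy)z + (yx)z - (xz)y - (yz)x + (zx)y - 3x(yz) = 0`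
polarizes to a Poisson algebra. -/
theorem stmt6 (K V : Type*) [Field K] [CharZero K] [AddCommGroup V] [Module K V]
    (m : V →ₗ[K] V →ₗ[K] V)
    (h : ∀ x y z : V,
      (3:K) • m (m x y) z + m (m y x) z - m (m x z) y - m (m y z) x + m (m z x) y
      - (3:K) • m x (m y z) = 0) :
    ∀ x y z : V,
      -- ∙ is commutative
      (m x y + m y x = m y x + m x y) ∧
      -- ∙ is associative
      (m (m x y + m y x) z + m z (m x y + m y x)
        = m x (m y z + m z y) + m (m y z + m z y) x) ∧
      -- [-,-] is anticommutative
      (m x y - m y x = -(m y x - m x y)) ∧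
      -- Jacobi identity for [-,-]
      ((m (m x y - m y x) z - m z (m x y - m y x))
        + (m (m y z - m z y) x - m x (m y z - m z y))
        + (m (m z x - m x z) y - m y (m z x - m x z)) = 0) ∧
      -- Leibniz rule [x∙y,z] = x∙[y,z] + [x,z]∙y
      (m (m x y + m y x) z - m z (m x y + m y x)
        = (m x (m y z - m z y) + m (m y z - m z y) x)
          + (m (m x z - m z x) y + m y (m x z - m z x))) := by
  intro x y z
  refine ⟨add_comm _ _, ?_, (neg_sub _ _).symm, ?_, ?_⟩
  · have h1 := h x y z; have h2 := h x z y; have h5 := h z x y; have h6 := h z y x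
    simp only [map_add, map_sub, LinearMap.add_apply, LinearMap.sub_apply] at *
    linear_combination (norm := module)
      ((3:K)⁻¹) • h1 + ((3:K)⁻¹) • h2 - ((3:K)⁻¹) • h5 - ((3:K)⁻¹) • h6
  · have h1 := h x y z; have h2 := h x z y; have h3 := h y x z
    have h4 := h y z x; have h5 := h z x y; have h6 := h z y x
    simp only [map_add, map_sub, LinearMap.add_apply, LinearMap.sub_apply] at *
    linear_combination (norm := module)
      ((3:K)⁻¹) • h1 - ((3:K)⁻¹) • h2 - ((3:K)⁻¹) • h3
      + ((3:K)⁻¹) • h4 + ((3:K)⁻¹) • h5 - ((3:K)⁻¹) • h6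
  · have h1 := h x y z; have h2 := h x z y; have h3 := h y x z
    have h4 := h y z x; have h5 := h z x y; have h6 := h z y x
    simp only [map_add, map_sub, LinearMap.add_apply, LinearMap.sub_apply] at *
    linear_combination (norm := module)
      ((3:K)⁻¹) • h1 - ((3:K)⁻¹) • h2 + ((3:K)⁻¹) • h3
      - ((3:K)⁻¹) • h4 + ((3:K)⁻¹) • h5 + ((3:K)⁻¹) • h6
end

section
/- Let (V,∙,[-,-]) be a Poisson algebra. Then the depolarized multiplication xy = (1/2)(x∙y + [x,y]) satisfies the identity 3(xy)z + (yx)z - (xz)y - (yz)x + (zx)y - 3x(yz) = 0 for all x,y,z ∈ V. -/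
/-- The depolarization of a Poisson algebra satisfies
`3(xy)z + (yx)z - (xz)y - (yz)x + (zx)y - 3x(yz) = 0`. -/
theorem stmt7 (K V : Type*) [Field K] [CharZero K] [AddCommGroup V] [Module K V]
    (bu br : V →ₗ[K] V →ₗ[K] V)
    (hcomm : ∀ x y : V, bu x y = bu y x)
    (hassoc : ∀ x y z : V, bu (bu x y) z = bu x (bu y z))
    (hanti : ∀ x y : V, br x y = - br y x)
    (hjac : ∀ x y z : V, br (br x y) z + br (br y z) x + br (br z x) y = 0)
    (hleib : ∀ x y z : V, br (bu x y) z = bu x (br y z) + bu (br x z) y)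
    (m : V → V → V)
    (hm : ∀ x y : V, m x y = ((1:K)/2) • (bu x y + br x y)) :
    ∀ x y z : V,
      (3:K) • m (m x y) z + m (m y x) z - m (m x z) y - m (m y z) x + m (m z x) y
      - (3:K) • m x (m y z) = 0 := by
  intro x y z
  have j := hjac x y z
  rw [hanti z x] at j
  simp only [map_neg, LinearMap.neg_apply] at j
  simp only [hm, map_add, map_smul, smul_add, LinearMap.add_apply, LinearMap.smul_apply]
  rw [hcomm y x, hanti y x, hcomm z x, hanti z x]
  simp only [map_neg, LinearMap.neg_apply, smul_neg, neg_neg]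
  rw [hanti x (bu y z), hcomm x (br y z), hanti x (br y z)]
  simp only [map_neg, LinearMap.neg_apply, smul_neg, neg_neg]
  rw [hleib x y z, hleib x z y, hleib y z x]
  rw [hanti z x, hanti y x, hanti z y]
  simp only [map_neg, LinearMap.neg_apply, smul_neg, neg_neg]
  rw [hassoc x y z, hassoc x z y, hcomm z y, hcomm (bu y z) x]
  rw [hcomm x (br y z), hcomm y (br x z)]
  linear_combination (norm := module) ((1:K)/2) • j
end

section
/- Every transposed Poisson algebra satisfies the identity x∙[y,z] + y∙[z,x] + z∙[x,y] = 0 for all x,y,z. -/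
/-- Every transposed Poisson algebra satisfies `x∙[y,z] + y∙[z,x] + z∙[x,y] = 0`. -/
theorem stmt8 (K V : Type*) [Field K] [CharZero K] [AddCommGroup V] [Module K V]
    (bu br : V →ₗ[K] V →ₗ[K] V)
    (hcomm : ∀ x y : V, bu x y = bu y x)
    (hassoc : ∀ x y z : V, bu (bu x y) z = bu x (bu y z))
    (hanti : ∀ x y : V, br x y = - br y x)
    (hjac : ∀ x y z : V, br (br x y) z + br (br y z) x + br (br z x) y = 0)
    (htp : ∀ x y z : V, (2:K) • bu z (br x y) = br (bu z x) y + br x (bu z y)) :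
    ∀ x y z : V, bu x (br y z) + bu y (br z x) + bu z (br x y) = 0 := by
  intro x y z
  have key : (2:K) • (bu x (br y z) + bu y (br z x) + bu z (br x y)) = 0 := by
    rw [smul_add, smul_add, htp y z x, htp z x y, htp x y z,
      hanti z (bu y x), hcomm y x, hanti y (bu x z), hcomm x z,
      hanti x (bu z y), hcomm z y]
    abel
  have h2 : (2:K) ≠ 0 := two_ne_zero
  exact (smul_eq_zero.mp key).resolve_left h2
end

section
/- Let (P,∙,{,}) be a Poisson superalgebra over a field of characteristic 0 and let xy = x∙y + {x,y} be its depolarization. Then for all homogeneous x,y,z ∈ P: 3(xy)z - 3x(yz) + (-1)^{|x||y|}(yx)z - (-1)^{|y||z|}(xz)y - (-1)^{|x||y|+|x||z|}(yz)x + (-1)^{|x||z|+|y||z|}(zx)y = 0. -/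
/-- The super sign `(-1)^{ij}` for degrees `i, j : ZMod 2`. -/
def ssgn (i j : ZMod 2) : ℤ := (-1) ^ (i.val * j.val)

lemma ssgn_comm : ∀ i j : ZMod 2, ssgn i j = ssgn j i := by decide

lemma ssgn_add_left : ∀ i j k : ZMod 2, ssgn (i + j) k = ssgn i k * ssgn j k := by decide

lemma ssgn_mul_self : ∀ i j : ZMod 2, ssgn i j * ssgn i j = 1 := by decide

/-- The depolarization `xy = x∙y + {x,y}` of a Poisson superalgebra satisfies the
super Poisson identity. -/
theorem stmt13 (K V : Type*) [Field K] [CharZero K] [AddCommGroup V] [Module K V]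
    (G : ZMod 2 → Submodule K V) (hG : DirectSum.IsInternal G)
    (bu br : V →ₗ[K] V →ₗ[K] V)
    (hbuG : ∀ (i j : ZMod 2), ∀ x ∈ G i, ∀ y ∈ G j, bu x y ∈ G (i + j))
    (hbrG : ∀ (i j : ZMod 2), ∀ x ∈ G i, ∀ y ∈ G j, br x y ∈ G (i + j))
    (hcomm : ∀ (i j : ZMod 2), ∀ x ∈ G i, ∀ y ∈ G j, bu y x = ssgn i j • bu x y)
    (hassoc : ∀ x y z : V, bu (bu x y) z = bu x (bu y z))
    (hanti : ∀ (i j : ZMod 2), ∀ x ∈ G i, ∀ y ∈ G j, br x y = -(ssgn i j • br y x))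
    (hjac : ∀ (i j k : ZMod 2), ∀ x ∈ G i, ∀ y ∈ G j, ∀ z ∈ G k,
      ssgn k i • br x (br y z) + ssgn i j • br y (br z x) + ssgn j k • br z (br x y) = 0)
    (hleib : ∀ (i j k : ZMod 2), ∀ x ∈ G i, ∀ y ∈ G j, ∀ z ∈ G k,
      br x (bu y z) = bu (br x y) z + ssgn i j • bu y (br x z))
    (m : V → V → V) (hm : ∀ x y : V, m x y = bu x y + br x y) :
    ∀ (i j k : ZMod 2), ∀ x ∈ G i, ∀ y ∈ G j, ∀ z ∈ G k,
      (3:K) • m (m x y) z - (3:K) • m x (m y z)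
      + ssgn i j • m (m y x) z - ssgn j k • m (m x z) y
      - (ssgn i j * ssgn i k) • m (m y z) x
      + (ssgn i k * ssgn j k) • m (m z x) y = 0 := by
  intro i j k x hx y hy z hz
  have mem_buxy : bu x y ∈ G (i + j) := hbuG i j x hx y hy
  have mem_brxy : br x y ∈ G (i + j) := hbrG i j x hx y hy
  have mem_buxz : bu x z ∈ G (i + k) := hbuG i k x hx z hz
  have mem_brzx : br z x ∈ G (k + i) := hbrG k i z hz x hx
  have mem_buyz : bu y z ∈ G (j + k) := hbuG j k y hy z hz
  have mem_bryz : br y z ∈ G (j + k) := hbrG j k y hy z hz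
  -- expand `m` and linearity in the goal
  simp only [hm, map_add, LinearMap.add_apply]
  simp only [← Int.cast_smul_eq_zsmul K, Int.cast_mul]
  -- abstract the three signs as elements of `K`
  obtain ⟨A, hA⟩ : ∃ t : K, ((ssgn i j : ℤ) : K) = t := ⟨_, rfl⟩
  obtain ⟨B, hB⟩ : ∃ t : K, ((ssgn j k : ℤ) : K) = t := ⟨_, rfl⟩
  obtain ⟨C, hC⟩ : ∃ t : K, ((ssgn i k : ℤ) : K) = t := ⟨_, rfl⟩
  rw [hA, hB, hC]
  have hA2 : A * A = 1 := by
    rw [← hA, ← Int.cast_mul, ssgn_mul_self, Int.cast_one]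
  have hB2 : B * B = 1 := by
    rw [← hB, ← Int.cast_mul, ssgn_mul_self, Int.cast_one]
  have hC2 : C * C = 1 := by
    rw [← hC, ← Int.cast_mul, ssgn_mul_self, Int.cast_one]
  have sA : ∀ v : V, (A * A) • v = v := fun v => by rw [hA2, one_smul]
  have sB : ∀ v : V, (B * B) • v = v := fun v => by rw [hB2, one_smul]
  have sC : ∀ v : V, (C * C) • v = v := fun v => by rw [hC2, one_smul]
  -- basic sign-twisted commutation facts
  have e2 : bu y x = A • bu x y := by
    rw [← hA, Int.cast_smul_eq_zsmul]; exact hcomm i j x hx y hy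
  have e3 : bu z y = B • bu y z := by
    rw [← hB, Int.cast_smul_eq_zsmul]; exact hcomm j k y hy z hz
  have e4 : bu z x = C • bu x z := by
    rw [← hC, Int.cast_smul_eq_zsmul]; exact hcomm i k x hx z hz
  have f1 : br y x = -(A • br x y) := by
    rw [← hA, Int.cast_smul_eq_zsmul, ssgn_comm i j]; exact hanti j i y hy x hx
  have f2 : br z y = -(B • br y z) := by
    rw [← hB, Int.cast_smul_eq_zsmul, ssgn_comm j k]; exact hanti k j z hz y hy
  have f3 : br x z = -(C • br z x) := by
    rw [← hC, Int.cast_smul_eq_zsmul]; exact hanti i k x hx z hz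
  -- the collection of relations between the 24 atoms
  have h1 : bu (bu x y) z = bu x (bu y z) := hassoc x y z
  have h3 : br (bu x y) z = -((C * B) • br z (bu x y)) := by
    rw [← hC, ← hB, ← Int.cast_mul, Int.cast_smul_eq_zsmul, ← ssgn_add_left]
    exact hanti (i + j) k _ mem_buxy z hz
  have h4 : br (br x y) z = -((C * B) • br z (br x y)) := by
    rw [← hC, ← hB, ← Int.cast_mul, Int.cast_smul_eq_zsmul, ← ssgn_add_left]
    exact hanti (i + j) k _ mem_brxy z hz
  have h5 : br z (bu x y) = bu (br z x) y + C • bu x (br z y) := by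
    rw [← hC, Int.cast_smul_eq_zsmul, ssgn_comm i k]
    exact hleib k i j z hz x hx y hy
  have h6 : bu x (br z y) = -(B • bu x (br y z)) := by rw [f2, map_neg, map_smul]
  have h7 : bu y (br z x) = (B * A) • bu (br z x) y := by
    rw [← hB, ← hA, ← Int.cast_mul, Int.cast_smul_eq_zsmul, ssgn_comm j k, ← ssgn_add_left]
    exact hcomm (k + i) j _ mem_brzx y hy
  have h8 : br x (bu y z) = bu (br x y) z + A • bu y (br x z) := by
    rw [← hA, Int.cast_smul_eq_zsmul]
    exact hleib i j k x hx y hy z hz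
  have h9 : bu y (br x z) = -(C • bu y (br z x)) := by rw [f3, map_neg, map_smul]
  have h10 : bu (bu x z) y = bu x (bu z y) := hassoc x z y
  have h11 : bu x (bu z y) = B • bu x (bu y z) := by rw [e3, map_smul]
  have h12 : br (bu x z) y = -((A * B) • br y (bu x z)) := by
    rw [← hA, ← hB, ← Int.cast_mul, Int.cast_smul_eq_zsmul, ssgn_comm j k, ← ssgn_add_left]
    exact hanti (i + k) j _ mem_buxz y hy
  have h13 : br y (bu x z) = bu (br y x) z + A • bu x (br y z) := by
    rw [← hA, Int.cast_smul_eq_zsmul, ssgn_comm i j]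
    exact hleib j i k y hy x hx z hz
  have h14 : bu (br y x) z = -(A • bu (br x y) z) := by
    rw [f1, map_neg, map_smul, LinearMap.neg_apply, LinearMap.smul_apply]
  have h15 : br (br z x) y = -((B * A) • br y (br z x)) := by
    rw [← hB, ← hA, ← Int.cast_mul, Int.cast_smul_eq_zsmul, ssgn_comm j k, ← ssgn_add_left]
    exact hanti (k + i) j _ mem_brzx y hy
  have h16 : bu x (bu y z) = (A * C) • bu (bu y z) x := by
    rw [← hA, ← hC, ← Int.cast_mul, Int.cast_smul_eq_zsmul, ssgn_comm i j, ssgn_comm i k,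
      ← ssgn_add_left]
    exact hcomm (j + k) i _ mem_buyz x hx
  have h17 : bu x (br y z) = (A * C) • bu (br y z) x := by
    rw [← hA, ← hC, ← Int.cast_mul, Int.cast_smul_eq_zsmul, ssgn_comm i j, ssgn_comm i k,
      ← ssgn_add_left]
    exact hcomm (j + k) i _ mem_bryz x hx
  have h18 : br (bu y z) x = -((A * C) • br x (bu y z)) := by
    rw [← hA, ← hC, ← Int.cast_mul, Int.cast_smul_eq_zsmul, ssgn_comm i j, ssgn_comm i k,
      ← ssgn_add_left]
    exact hanti (j + k) i _ mem_buyz x hx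
  have h19 : br (br y z) x = -((A * C) • br x (br y z)) := by
    rw [← hA, ← hC, ← Int.cast_mul, Int.cast_smul_eq_zsmul, ssgn_comm i j, ssgn_comm i k,
      ← ssgn_add_left]
    exact hanti (j + k) i _ mem_bryz x hx
  have hjacK : C • br x (br y z) + A • br y (br z x) + B • br z (br x y) = 0 := by
    rw [← hC, ← hA, ← hB, Int.cast_smul_eq_zsmul, Int.cast_smul_eq_zsmul,
      Int.cast_smul_eq_zsmul, ssgn_comm i k]
    exact hjac i j k x hx y hy z hz
  have g1 : bu (bu y x) z = A • bu (bu x y) z := by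
    rw [e2, map_smul, LinearMap.smul_apply]
  have g3 : br (bu y x) z = A • br (bu x y) z := by
    rw [e2, map_smul, LinearMap.smul_apply]
  have g4 : br (br y x) z = -(A • br (br x y) z) := by
    rw [f1, map_neg, map_smul, LinearMap.neg_apply, LinearMap.smul_apply]
  have g5 : bu (br x z) y = -(C • bu (br z x) y) := by
    rw [f3, map_neg, map_smul, LinearMap.neg_apply, LinearMap.smul_apply]
  have g6 : br (br x z) y = -(C • br (br z x) y) := by
    rw [f3, map_neg, map_smul, LinearMap.neg_apply, LinearMap.smul_apply]
  have g7 : bu (bu z x) y = C • bu (bu x z) y := by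
    rw [e4, map_smul, LinearMap.smul_apply]
  have g8 : br (bu z x) y = C • br (bu x z) y := by
    rw [e4, map_smul, LinearMap.smul_apply]
  linear_combination (norm := module)
    (4:K) • h1 + (4:K) • h3 + (2:K) • h4 + (-((4:K) * (B * C))) • h5 + (-((4:K) * B)) • h6
    + ((2:K) * (A * C)) • h7 + (-(2:K)) • h8 + (-((2:K) * A)) • h9
    + A • h14 + ((2:K) * (B * C)) • h15 + h16 + h17 + (-(A * C)) • h18 + (-(A * C)) • h19
    + (-((2:K) * C)) • hjacK
    + A • g1 + A • g3 + A • g4 + (-B) • g5 + (-B) • g6 + (B * C) • g7 + (B * C) • g8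
    + sA (bu (bu x y) z) + (-(1:K)) • sA (bu (br x y) z) + sA (br (bu x y) z)
    + (-(1:K)) • sA (br (br x y) z) + (C * C) • sA (br x (bu y z))
    + (C * C) • sA (br x (br y z)) + ((2:K) * (B * C)) • sA (bu (br z x) y)
    + (4:K) • sB (bu x (br y z)) + (-((2:K) * (A * C))) • sB (br y (br z x))
    + sC (br x (bu y z)) + (3:K) • sC (br x (br y z)) + B • sC (bu (bu x z) y)
    + B • sC (br (bu x z) y) + (-((4:K) * B)) • sC (bu x (br z y))
end

section
/- Let P = P₀⊕P₁ be a ℤ₂-graded vector space over a field of characteristic 0 with a bilinear product xy satisfying, for all homogeneous x,y,z: 3(xy)z - 3x(yz) + (-1)^{|x||y|}(yx)z - (-1)^{|y||z|}(xz)y - (-1)^{|x||y|+|x||z|}(yz)x + (-1)^{|x||z|+|y||z|}(zx)y = 0. Then the product is superflexive: A(x,y,z) + (-1)^{|x||z|+|x||y|+|y||z|} A(z,y,x) = 0 for all homogeneous x,y,z, where A(x,y,z) = (xy)z - x(yz). -/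
/-- A bilinear product on a ℤ₂-graded space satisfying the super Poisson identity
is superflexive: `A(x,y,z) + (-1)^{|x||z|+|x||y|+|y||z|} A(z,y,x) = 0`. -/
theorem stmt14 (K V : Type*) [Field K] [CharZero K] [AddCommGroup V] [Module K V]
    (G : ZMod 2 → Submodule K V) (hG : DirectSum.IsInternal G)
    (m : V →ₗ[K] V →ₗ[K] V)
    (h : ∀ (i j k : ZMod 2), ∀ x ∈ G i, ∀ y ∈ G j, ∀ z ∈ G k,
      (3:K) • m (m x y) z - (3:K) • m x (m y z)
      + ssgn i j • m (m y x) z - ssgn j k • m (m x z) y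
      - (ssgn i j * ssgn i k) • m (m y z) x
      + (ssgn i k * ssgn j k) • m (m z x) y = 0) :
    ∀ (i j k : ZMod 2), ∀ x ∈ G i, ∀ y ∈ G j, ∀ z ∈ G k,
      (m (m x y) z - m x (m y z))
      + (ssgn i k * ssgn i j * ssgn j k) • (m (m z y) x - m z (m y x)) = 0 := by
  intro i j k x hx y hy z hz
  have h1 := h i j k x hx y hy z hz
  have h2 := h k j i z hz y hy x hx
  fin_cases i <;> fin_cases j <;> fin_cases k <;>
    simp only [ssgn, ZMod.val, show ((0:Fin 2):ZMod 2).val = 0 from rfl,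
      show ((1:Fin 2):ZMod 2).val = 1 from rfl] at h1 h2 ⊢ <;>
    norm_num at h1 h2 ⊢ <;>
    first
    | linear_combination (norm := module) (3:K)⁻¹ • h1 + (3:K)⁻¹ • h2
    | linear_combination (norm := module) (3:K)⁻¹ • h1 - (3:K)⁻¹ • h2
end

section
/- Let (P,∙,{,}) be a Poisson superalgebra (with depolarization xy = x∙y + {x,y}) and let y ∈ P₁ be an odd homogeneous element. Then y·y = {y,y}, y·(y·y) = (y·y)·y, and (y·y)·(y·y) = y·((y·y)·y); in particular y² := y·y, y³ and y⁴ are well-defined independently of bracketing. -/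
lemma aux_two {K V : Type*} [Field K] [CharZero K] [AddCommGroup V] [Module K V]
    (x : V) (h : x + x = 0) : x = 0 := by
  have h2 : (2 : K) • x = 0 := by rw [two_smul]; exact h
  exact (smul_eq_zero.mp h2).resolve_left (by norm_num)

lemma aux_three {K V : Type*} [Field K] [CharZero K] [AddCommGroup V] [Module K V]
    (x : V) (h : x + x + x = 0) : x = 0 := by
  have h3 : (3 : K) • x = 0 := by
    rw [show (3 : K) = 1 + 1 + 1 by norm_num, add_smul, add_smul, one_smul]; exact h
  exact (smul_eq_zero.mp h3).resolve_left (by norm_num)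

/-- In a Poisson superalgebra with depolarization `xy = x∙y + {x,y}`, for any odd
element `y` one has `y·y = {y,y}`, `y·(y·y) = (y·y)·y` and
`(y·y)·(y·y) = y·((y·y)·y)`, so `y²`, `y³`, `y⁴` are well defined. -/
theorem stmt15 (K V : Type*) [Field K] [CharZero K] [AddCommGroup V] [Module K V]
    (G : ZMod 2 → Submodule K V) (hG : DirectSum.IsInternal G)
    (bu br : V →ₗ[K] V →ₗ[K] V)
    (hbuG : ∀ (i j : ZMod 2), ∀ x ∈ G i, ∀ y ∈ G j, bu x y ∈ G (i + j))
    (hbrG : ∀ (i j : ZMod 2), ∀ x ∈ G i, ∀ y ∈ G j, br x y ∈ G (i + j))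
    (hcomm : ∀ (i j : ZMod 2), ∀ x ∈ G i, ∀ y ∈ G j, bu y x = ssgn i j • bu x y)
    (hassoc : ∀ x y z : V, bu (bu x y) z = bu x (bu y z))
    (hanti : ∀ (i j : ZMod 2), ∀ x ∈ G i, ∀ y ∈ G j, br x y = -(ssgn i j • br y x))
    (hjac : ∀ (i j k : ZMod 2), ∀ x ∈ G i, ∀ y ∈ G j, ∀ z ∈ G k,
      ssgn k i • br x (br y z) + ssgn i j • br y (br z x) + ssgn j k • br z (br x y) = 0)
    (hleib : ∀ (i j k : ZMod 2), ∀ x ∈ G i, ∀ y ∈ G j, ∀ z ∈ G k,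
      br x (bu y z) = bu (br x y) z + ssgn i j • bu y (br x z))
    (m : V → V → V) (hm : ∀ x y : V, m x y = bu x y + br x y)
    (y : V) (hy : y ∈ G 1) :
    m y y = br y y ∧
    m y (m y y) = m (m y y) y ∧
    m (m y y) (m y y) = m y (m (m y y) y) := by
  have h11 : ssgn 1 1 = -1 := by decide
  have h10 : ssgn 1 0 = 1 := by decide
  have h01 : ssgn 0 1 = 1 := by decide
  have h00 : ssgn 0 0 = 1 := by decide
  -- bu y y = 0
  have hbu0 : bu y y = 0 := by
    have h := hcomm 1 1 y hy y hy
    rw [h11] at h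
    refine aux_two (K := K) _ ?_
    nth_rewrite 2 [h]
    simp
  set z := br y y with hzdef
  have hz : z ∈ G 0 := by
    have := hbrG 1 1 y hy y hy
    rwa [show (1 + 1 : ZMod 2) = 0 by decide] at this
  -- br y z = 0
  have hbryz : br y z = 0 := by
    have hj := hjac 1 1 1 y hy y hy y hy
    rw [h11] at hj
    refine aux_three (K := K) _ ?_
    have : -(br y z) + -(br y z) + -(br y z) = 0 := by
      simpa [neg_smul, one_smul] using hj
    have := congrArg Neg.neg this
    simp only [neg_add, neg_neg] at this
    linear_combination (norm := abel) this
  -- br z z = 0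
  have hbrzz : br z z = 0 := by
    have h := hanti 0 0 z hz z hz
    rw [h00, one_smul] at h
    refine aux_two (K := K) _ ?_
    nth_rewrite 2 [h]
    simp
  -- br z y = 0
  have hbrzy : br z y = 0 := by
    have h := hanti 0 1 z hz y hy
    rw [h01, one_smul, hbryz] at h
    simpa using h
  -- bu z y = bu y z
  have hbuzy : bu z y = bu y z := by
    have h := hcomm 1 0 y hy z hz
    rwa [h10, one_smul] at h
  have hmyy : m y y = z := by rw [hm, hbu0, zero_add]
  refine ⟨hmyy, ?_, ?_⟩
  · rw [hmyy, hm, hm, hbryz, hbrzy, hbuzy]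
  · have hmzy : m z y = bu y z := by rw [hm, hbrzy, hbuzy, add_zero]
    rw [hmyy, hmzy, hm, hm, hbrzz, add_zero]
    have hleib' := hleib 1 1 0 y hy y hy z hz
    rw [h11, hbryz, ← hzdef] at hleib'
    have hbuyw : bu y (bu y z) = 0 := by
      rw [← hassoc y y z, hbu0]
      simp
    rw [hbuyw, zero_add, hleib']
    simp
end

section
/- Let (V,[-,-]) be an anticommutative algebra and f ∈ End(V) with [f(x),y] + [x,f(y)] = 0 for all x,y. Then the multiplication x∙y := [x,f(y)] is commutative, and for all x,y,z the following hold: A∙(x,y,z) + A∙(y,z,x) + A∙(z,x,y) = 0 and A∙(x,y,z) + A∙(z,y,x) = 0, where A∙(x,y,z) = (x∙y)∙z - x∙(y∙z). -/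
/-- For an anticommutative product `[-,-]` and `f` with `[f(x),y] + [x,f(y)] = 0`,
the product `x∙y := [x,f(y)]` is commutative and its associator satisfies
`A(x,y,z) + A(y,z,x) + A(z,x,y) = 0` and `A(x,y,z) + A(z,y,x) = 0`. -/
theorem stmt17 (K V : Type*) [Field K] [CharZero K] [AddCommGroup V] [Module K V]
    (br : V →ₗ[K] V →ₗ[K] V)
    (hanti : ∀ x y : V, br x y = - br y x)
    (f : V →ₗ[K] V)
    (hf : ∀ x y : V, br (f x) y + br x (f y) = 0)
    (bu : V → V → V)
    (hbu : ∀ x y : V, bu x y = br x (f y)) :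
    ∀ x y z : V,
      (bu x y = bu y x) ∧
      ((bu (bu x y) z - bu x (bu y z)) + (bu (bu y z) x - bu y (bu z x))
        + (bu (bu z x) y - bu z (bu x y)) = 0) ∧
      ((bu (bu x y) z - bu x (bu y z)) + (bu (bu z y) x - bu z (bu y x)) = 0) := by
  have comm : ∀ a b : V, bu a b = bu b a := by
    intro a b
    rw [hbu, hbu]
    have h1 : br a (f b) = - br (f a) b := eq_neg_of_add_eq_zero_right (hf a b)
    rw [h1, hanti b (f a)]
  intro x y z
  refine ⟨comm x y, ?_, ?_⟩
  · rw [comm x (bu y z), comm y (bu z x), comm z (bu x y)]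
    abel
  · rw [comm x (bu y z), comm z (bu y x), comm z y, comm y x]
    abel
end

section
/- Let V be a vector space over a field of characteristic 0 with an anticommutative multiplication [-,-] and a commutative multiplication ∙ satisfying the distributive law [x₁,x₂]∙x₃ + [x₂,x₃]∙x₁ + [x₃,x₁]∙x₂ = 0. Then the depolarization xy = (1/2)(x∙y + [x,y]) satisfies AA(x₁,x₂,x₃) - AA(x₂,x₁,x₃) - AA(x₃,x₂,x₁) - AA(x₁,x₃,x₂) + AA(x₂,x₃,x₁) + AA(x₃,x₁,x₂) = 0, where AA(x,y,z) = (xy)z + x(yz). -/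
/-- If a commutative product `∙` and an anticommutative product `[-,-]` satisfy
`[x₁,x₂]∙x₃ + [x₂,x₃]∙x₁ + [x₃,x₁]∙x₂ = 0`, then the depolarization
`xy = (1/2)(x∙y + [x,y])` satisfies the stated antiassociator identity. -/
theorem stmt18 (K V : Type*) [Field K] [CharZero K] [AddCommGroup V] [Module K V]
    (bu br : V →ₗ[K] V →ₗ[K] V)
    (hcomm : ∀ x y : V, bu x y = bu y x)
    (hanti : ∀ x y : V, br x y = - br y x)
    (hdis : ∀ x y z : V, bu (br x y) z + bu (br y z) x + bu (br z x) y = 0)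
    (m : V → V → V)
    (hm : ∀ x y : V, m x y = ((1:K)/2) • (bu x y + br x y)) :
    ∀ x y z : V,
      (m (m x y) z + m x (m y z)) - (m (m y x) z + m y (m x z))
      - (m (m z y) x + m z (m y x)) - (m (m x z) y + m x (m z y))
      + (m (m y z) x + m y (m z x)) + (m (m z x) y + m z (m x y)) = 0 := by
  intro x y z
  have h := hdis x y z
  simp only [hm, hcomm y x, hcomm z x, hcomm z y, hanti y x, hanti z x, hanti z y,
    map_add, map_smul, map_neg, LinearMap.add_apply, LinearMap.smul_apply,
    LinearMap.neg_apply, smul_add, smul_neg, smul_smul, neg_neg,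
    hcomm x (bu x y), hcomm y (bu x y), hcomm z (bu x y),
    hcomm x (bu x z), hcomm y (bu x z), hcomm z (bu x z),
    hcomm x (bu y z), hcomm y (bu y z), hcomm z (bu y z),
    hcomm x (br x y), hcomm y (br x y), hcomm z (br x y),
    hcomm x (br x z), hcomm y (br x z), hcomm z (br x z),
    hcomm x (br y z), hcomm y (br y z), hcomm z (br y z),
    hanti x (bu x y), hanti y (bu x y), hanti z (bu x y),
    hanti x (bu x z), hanti y (bu x z), hanti z (bu x z),
    hanti x (bu y z), hanti y (bu y z), hanti z (bu y z),
    hanti x (br x y), hanti y (br x y), hanti z (br x y),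
    hanti x (br x z), hanti y (br x z), hanti z (br x z),
    hanti x (br y z), hanti y (br y z), hanti z (br y z)] at h ⊢
  linear_combination (norm := module) h
end
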